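/- For A(r) = 1 - K r and C(r) = 1 (with K ≠ 0 and 1 - K r > 0), the function ψ(r) = √(-6/β) · log(1 - K r) (with β < 0) satisfies the equation 2(r³A'³ + rA' - 1) + A²(2 + 4r²A'' - 2rA' - β r²ψ'²) - 4A³ + 2A(2r²A'² + rA'(r²A'' + 2) + 2) = 0 for all r with 0 < r < 1/K. -/

import Mathlib

/-- Field equation check for the exact solution A = 1 - K r, ψ = √(-6/β) log(1-Kr),
with C = 1, in boundary-coupled scalar-torsion gravity (real tetrad). -/
theorem stmt_0 (K β : ℝ) (hK : K ≠ 0) (hβ : β < 0)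
    (A ψ : ℝ → ℝ)
    (hA : ∀ r, A r = 1 - K * r)
    (hψ : ∀ r, 1 - K * r > 0 → ψ r = Real.sqrt (-6 / β) * Real.log (1 - K * r)) :
    ∀ r : ℝ, 0 < r → r < 1 / K → 1 - K * r > 0 →
      2 * (r ^ 3 * (deriv A r) ^ 3 + r * deriv A r - 1)
        + (A r) ^ 2 * (2 + 4 * r ^ 2 * deriv (deriv A) r - 2 * r * deriv A r
            - β * r ^ 2 * (deriv ψ r) ^ 2)
        - 4 * (A r) ^ 3
        + 2 * (A r) * (2 * r ^ 2 * (deriv A r) ^ 2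
            + r * deriv A r * (r ^ 2 * deriv (deriv A) r + 2) + 2) = 0 := by
  intro r hr0 hr1 hpos
  have hAfun : A = fun x => 1 - K * x := funext hA
  have hdA : deriv A = fun _ => -K := by
    subst hAfun
    funext x
    have : HasDerivAt (fun x : ℝ => 1 - K * x) (-K) x := by
      simpa using ((hasDerivAt_id x).const_mul K).const_sub 1
    exact this.deriv
  have hddA : deriv (deriv A) r = 0 := by
    rw [hdA]; simp
  -- derivative of ψ
  set c := Real.sqrt (-6 / β) with hc
  have hopen : IsOpen {x : ℝ | 1 - K * x > 0} := by
    have : Continuous fun x : ℝ => 1 - K * x := by continuity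
    exact isOpen_lt continuous_const this
  have heq : ψ =ᶠ[nhds r] fun x => c * Real.log (1 - K * x) :=
    Filter.eventuallyEq_of_mem (hopen.mem_nhds hpos) fun x hx => hψ x hx
  have hdψ : deriv ψ r = c * (-K / (1 - K * r)) := by
    rw [heq.deriv_eq]
    have h1 : HasDerivAt (fun x : ℝ => 1 - K * x) (-K) r := by
      simpa using ((hasDerivAt_id r).const_mul K).const_sub 1
    have h2 : HasDerivAt (fun x : ℝ => Real.log (1 - K * x)) (-K / (1 - K * r)) r :=
      h1.log (ne_of_gt hpos)
    exact ((h2.const_mul c)).deriv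
  have hc2 : c ^ 2 = -6 / β := by
    rw [hc, sq, Real.mul_self_sqrt]
    exact le_of_lt (div_pos_of_neg_of_neg (by norm_num) hβ)
  have hβψ : β * r ^ 2 * (deriv ψ r) ^ 2 = -6 * K ^ 2 * r ^ 2 / (1 - K * r) ^ 2 := by
    rw [hdψ, mul_pow, hc2]
    have h := ne_of_gt hpos
    have hβ0 : β ≠ 0 := ne_of_lt hβ
    field_simp
  rw [hddA, hβψ]
  simp only [hA, hdA]
  have h := ne_of_gt hpos
  have h' : 1 - r * K ≠ 0 := by rw [mul_comm]; exact h
  field_simp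
  ring
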